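/- Let K ⊂ ℝ^d be a convex body with 0 in its interior whose gauge g_K is differentiable in a neighborhood of ∂K, and let γ : [0,T] → ∂K be a continuous closed curve (γ(0) = γ(T)) such that the outer normals along γ average to zero: ∫₀ᵀ ∇g_K(γ(t)) dt = 0. Then γ cannot be translated into the interior of K: for every v ∈ ℝ^d there exists t ∈ [0,T] with γ(t) + v ∉ int K. -/

import Mathlib

noncomputable section

open Set intervalIntegral

open scoped RealInnerProductSpace

/-- `ℝ^d`, the real Euclidean space. -/
abbrev Rd (d : ℕ) := EuclideanSpace ℝ (Fin d)

/-- Subgradient inequality for the gauge of a convex absorbent set at a point of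
differentiability. -/
lemma gauge_subgradient_ineq {d : ℕ} {K : Set (Rd d)} (hKconv : Convex ℝ K)
    (habs : Absorbent ℝ K) {x : Rd d} {g : Rd d} (hg : HasGradientAt (gauge K) g x)
    (v : Rd d) : ⟪g, v⟫ ≤ gauge K (x + v) - gauge K x := by
  have hline : HasDerivAt (fun s : ℝ => x + s • v) v 0 := by
    simpa using ((hasDerivAt_id (0 : ℝ)).smul_const v).const_add x
  have hq : HasDerivAt (fun s : ℝ => gauge K (x + s • v)) ⟪g, v⟫ 0 := by
    have hfx : HasFDerivAt (gauge K) (InnerProductSpace.toDual ℝ (Rd d) g)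
        ((fun s : ℝ => x + s • v) 0) := by
      simpa using hg.hasFDerivAt
    have h := hfx.comp_hasDerivAt 0 hline
    rw [InnerProductSpace.toDual_apply_apply] at h
    exact h
  have htend : Filter.Tendsto (slope (fun s : ℝ => gauge K (x + s • v)) 0)
      (nhdsWithin 0 (Ioi 0)) (nhds ⟪g, v⟫) :=
    (hasDerivAt_iff_tendsto_slope.mp hq).mono_left
      (nhdsWithin_mono 0 (fun s hs => ne_of_gt hs))
  refine le_of_tendsto htend ?_
  filter_upwards [Ioc_mem_nhdsGT (one_pos : (0:ℝ) < 1)] with s hs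
  have hs0 : 0 < s := hs.1
  have hs1 : s ≤ 1 := hs.2
  have hdecomp : x + s • v = (1 - s) • x + s • (x + v) := by
    rw [smul_add, sub_smul, one_smul]; abel
  have hconvq : gauge K (x + s • v) ≤ (1 - s) * gauge K x + s * gauge K (x + v) := by
    rw [hdecomp]
    calc gauge K ((1 - s) • x + s • (x + v))
        ≤ gauge K ((1 - s) • x) + gauge K (s • (x + v)) := gauge_add_le hKconv habs _ _
      _ = (1 - s) * gauge K x + s * gauge K (x + v) := by
          rw [gauge_smul_of_nonneg (by linarith), gauge_smul_of_nonneg hs0.le,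
            smul_eq_mul, smul_eq_mul]
  have h0 : (fun s : ℝ => gauge K (x + s • v)) 0 = gauge K x := by simp
  rw [slope_def_field]
  simp only [h0, sub_zero] at *
  rw [div_le_iff₀ hs0]
  nlinarith [hconvq]

/-- if the outer normals `∇g_K` along a continuous closed curve
`γ : [0,T] → ∂K` integrate to zero, then `γ` cannot be translated into the interior of `K`. -/
theorem normals_average_zero_implies_nontranslatable {d : ℕ} (K : Set (Rd d))
    (hKcomp : IsCompact K) (hKconv : Convex ℝ K) (hK0 : (0 : Rd d) ∈ interior K)
    (gradg : Rd d → Rd d) (U : Set (Rd d)) (hUopen : IsOpen U) (hUfr : frontier K ⊆ U)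
    (hgrad : ∀ x ∈ U, HasGradientAt (gauge K) (gradg x) x)
    (T : ℝ) (hT : 0 < T) (γ : ℝ → Rd d)
    (hcont : ContinuousOn γ (Icc 0 T))
    (hbd : ∀ t ∈ Icc (0 : ℝ) T, γ t ∈ frontier K)
    (hclosed : γ 0 = γ T)
    (hzero : (∫ t in (0 : ℝ)..T, gradg (γ t)) = 0) :
    ∀ v : Rd d, ∃ t ∈ Icc (0 : ℝ) T, γ t + v ∉ interior K := by
  intro v
  by_contra hcon
  push_neg at hcon
  have hKnhds : K ∈ nhds (0 : Rd d) := mem_interior_iff_mem_nhds.mp hK0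
  have habs : Absorbent ℝ K := absorbent_nhds_zero hKnhds
  obtain ⟨r, hr0, hrK⟩ := Metric.mem_nhds_iff.mp hKnhds
  set L : NNReal := (⟨r, hr0.le⟩ : NNReal)⁻¹ with hL
  have hlip : LipschitzWith L (gauge K) :=
    hKconv.lipschitzWith_gauge (by exact_mod_cast hr0) hrK
  have hU : ∀ t ∈ Icc (0:ℝ) T, γ t ∈ U := fun t ht => hUfr (hbd t ht)
  -- measurability of `gradg ∘ γ`
  have hmeas : MeasureTheory.AEStronglyMeasurable (fun t => gradg (γ t))
      (MeasureTheory.volume.restrict (Ioc (0:ℝ) T)) := by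
    have hγm : AEMeasurable γ (MeasureTheory.volume.restrict (Ioc (0:ℝ) T)) :=
      (hcont.mono Ioc_subset_Icc_self).aemeasurable measurableSet_Ioc
    have h1 : AEMeasurable (fun t => fderiv ℝ (gauge K) (γ t))
        (MeasureTheory.volume.restrict (Ioc (0:ℝ) T)) :=
      (measurable_fderiv ℝ (gauge K)).comp_aemeasurable hγm
    have h2 : AEMeasurable
        (fun t => (InnerProductSpace.toDual ℝ (Rd d)).symm (fderiv ℝ (gauge K) (γ t)))
        (MeasureTheory.volume.restrict (Ioc (0:ℝ) T)) :=
      ((InnerProductSpace.toDual ℝ (Rd d)).symm.continuous.measurable).comp_aemeasurable h1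
    refine h2.aestronglyMeasurable.congr ?_
    refine (MeasureTheory.ae_restrict_iff' measurableSet_Ioc).mpr
      (MeasureTheory.ae_of_all _ fun t ht => ?_)
    have h3 : fderiv ℝ (gauge K) (γ t) = InnerProductSpace.toDual ℝ (Rd d) (gradg (γ t)) :=
      ((hgrad _ (hU t (Ioc_subset_Icc_self ht))).hasFDerivAt).fderiv
    show (InnerProductSpace.toDual ℝ (Rd d)).symm (fderiv ℝ (gauge K) (γ t)) = gradg (γ t)
    rw [h3, LinearIsometryEquiv.symm_apply_apply]
  -- uniform bound
  have hbound : ∀ t ∈ Icc (0:ℝ) T, ‖gradg (γ t)‖ ≤ (L : ℝ) := by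
    intro t ht
    have h := (hgrad _ (hU t ht)).hasFDerivAt.le_of_lipschitz hlip
    rwa [(InnerProductSpace.toDual ℝ (Rd d)).norm_map (gradg (γ t))] at h
  -- integrability
  have hint : IntervalIntegrable (fun t => gradg (γ t)) MeasureTheory.volume 0 T := by
    rw [intervalIntegrable_iff_integrableOn_Ioc_of_le hT.le]
    refine MeasureTheory.Integrable.mono' (MeasureTheory.integrable_const (L : ℝ)) hmeas ?_
    exact (MeasureTheory.ae_restrict_iff' measurableSet_Ioc).mpr
      (MeasureTheory.ae_of_all _ fun t ht => hbound t (Ioc_subset_Icc_self ht))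
  have hintIoc : MeasureTheory.Integrable (fun t => gradg (γ t))
      (MeasureTheory.volume.restrict (Ioc (0:ℝ) T)) :=
    (intervalIntegrable_iff_integrableOn_Ioc_of_le hT.le).mp hint
  have hφint : IntervalIntegrable (fun t => ⟪v, gradg (γ t)⟫) MeasureTheory.volume 0 T := by
    rw [intervalIntegrable_iff_integrableOn_Ioc_of_le hT.le]
    exact hintIoc.const_inner v
  have hφ0 : (∫ t in (0:ℝ)..T, ⟪v, gradg (γ t)⟫) = 0 := by
    rw [intervalIntegral.integral_of_le hT.le] at hzero ⊢
    rw [integral_inner hintIoc v, hzero, inner_zero_right]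
  have hpos : 0 < ∫ t in (0:ℝ)..T, (-⟪v, gradg (γ t)⟫) := by
    refine intervalIntegral_pos_of_pos_on hφint.neg (fun t ht => ?_) hT
    have htIcc : t ∈ Icc (0:ℝ) T := Ioo_subset_Icc_self ht
    have hsub : ⟪gradg (γ t), v⟫ ≤ gauge K (γ t + v) - gauge K (γ t) :=
      gauge_subgradient_ineq hKconv habs (hgrad _ (hU t htIcc)) v
    have h1 : gauge K (γ t) = 1 :=
      (gauge_eq_one_iff_mem_frontier hKconv hKnhds).mpr (hbd t htIcc)
    have h2 : gauge K (γ t + v) < 1 := interior_subset_gauge_lt_one K (hcon t htIcc)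
    have hlt : ⟪v, gradg (γ t)⟫ < 0 := by rw [real_inner_comm]; linarith
    linarith
  rw [intervalIntegral.integral_neg, hφ0, neg_zero] at hpos
  exact lt_irrefl 0 hpos
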